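/- For F ∈ 𝓕 and i.i.d. nonnegative X₁,...,Xₙ with distribution F, the condition lim_{K→∞} liminf_{x→∞} P(X_{2,n} ≤ K | Sₙ > x) = 1 is equivalent to lim_{K→∞} inf_{x≥0} P(X_{2,n} ≤ K | Sₙ > x) = 1, where X_{2,n} is the second largest of X₁,...,Xₙ and Sₙ = X₁ + ⋯ + Xₙ. -/

import Mathlib

open MeasureTheory Filter Set
open scoped ENNReal

/-- `P` under the law of `n` i.i.d. copies with common law `μ`. -/
noncomputable def piP (μ : Measure ℝ) (n : ℕ) (A : Set (Fin n → ℝ)) : ℝ :=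
  ((Measure.pi fun _ : Fin n => μ) A).toReal

/-- The event `Sₙ > x`. -/
def SumGt {n : ℕ} (x : ℝ) (v : Fin n → ℝ) : Prop := x < ∑ i, v i

/-- The event that the second largest of `v 0, …, v (n-1)` is `≤ K`. -/
def SecondLe {n : ℕ} (K : ℝ) (v : Fin n → ℝ) : Prop :=
  ∀ i j : Fin n, i ≠ j → v i ≤ K ∨ v j ≤ K

/-- Conditional probability `P(A | Sₙ > x)`. -/
noncomputable def condN (μ : Measure ℝ) (n : ℕ) (A : Set (Fin n → ℝ)) (x : ℝ) : ℝ :=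
  piP μ n (A ∩ {v | SumGt x v}) / piP μ n {v | SumGt x v}

section Aux

variable (μ : Measure ℝ) [IsProbabilityMeasure μ] {n : ℕ}

lemma piP_nonneg (A : Set (Fin n → ℝ)) : 0 ≤ piP μ n A := ENNReal.toReal_nonneg

lemma piP_mono {A B : Set (Fin n → ℝ)} (h : A ⊆ B) : piP μ n A ≤ piP μ n B :=
  ENNReal.toReal_mono (measure_ne_top _ _) (measure_mono h)

lemma piP_le_one (A : Set (Fin n → ℝ)) : piP μ n A ≤ 1 := by
  have h := piP_mono μ (subset_univ A)
  simpa [piP] using h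

lemma condN_nonneg (A : Set (Fin n → ℝ)) (x : ℝ) : 0 ≤ condN μ n A x :=
  div_nonneg (piP_nonneg μ _) (piP_nonneg μ _)

lemma condN_le_one (A : Set (Fin n → ℝ)) (x : ℝ) : condN μ n A x ≤ 1 :=
  div_le_one_of_le₀ (piP_mono μ inter_subset_right) (piP_nonneg μ _)

lemma condN_mono {A B : Set (Fin n → ℝ)} (h : A ⊆ B) (x : ℝ) :
    condN μ n A x ≤ condN μ n B x := by
  exact div_le_div_of_nonneg_right
    (piP_mono μ (inter_subset_inter_left _ h)) (piP_nonneg μ _)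

lemma secondLe_mono {K K' : ℝ} (h : K ≤ K') :
    {v : Fin n → ℝ | SecondLe K v} ⊆ {v : Fin n → ℝ | SecondLe K' v} := by
  intro v hv i j hij
  rcases hv i j hij with h1 | h1
  · exact Or.inl (h1.trans h)
  · exact Or.inr (h1.trans h)

lemma denom_antitone {x y : ℝ} (hxy : x ≤ y) :
    piP μ n {v : Fin n → ℝ | SumGt y v} ≤ piP μ n {v : Fin n → ℝ | SumGt x v} :=
  piP_mono μ fun _ hv => lt_of_le_of_lt hxy hv

lemma denom_pos (hub : ∀ x : ℝ, 0 < μ (Set.Ioi x)) (hn : 0 < n) {x : ℝ} (hx : 0 ≤ x) :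
    0 < piP μ n {v : Fin n → ℝ | SumGt x v} := by
  haveI : Nonempty (Fin n) := ⟨⟨0, hn⟩⟩
  have hsub : Set.pi univ (fun _ : Fin n => Ioi x) ⊆ {v : Fin n → ℝ | SumGt x v} := by
    intro v hv
    have h1 : ∑ _i : Fin n, x < ∑ i, v i :=
      Finset.sum_lt_sum_of_nonempty Finset.univ_nonempty fun i _ => hv i (mem_univ i)
    have h2 : x ≤ ∑ _i : Fin n, x := by
      rw [Finset.sum_const, Finset.card_univ, Fintype.card_fin, nsmul_eq_mul]
      exact le_mul_of_one_le_left hx (by exact_mod_cast hn)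
    exact lt_of_le_of_lt h2 h1
  have hval : (Measure.pi fun _ : Fin n => μ) (Set.pi univ fun _ : Fin n => Ioi x)
      = μ (Ioi x) ^ n := by
    rw [Measure.pi_pi]
    simp [Finset.prod_const, Finset.card_univ]
  have hpos : 0 < (Measure.pi fun _ : Fin n => μ) {v : Fin n → ℝ | SumGt x v} := by
    calc (0 : ℝ≥0∞) < μ (Ioi x) ^ n := ENNReal.pow_pos (hub x) n
    _ = _ := hval.symm
    _ ≤ _ := measure_mono hsub
  exact ENNReal.toReal_pos (ne_of_gt hpos) (measure_ne_top _ _)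

lemma eval_Ioi_measure (i : Fin n) (K : ℝ) :
    (Measure.pi fun _ : Fin n => μ) (Function.eval i ⁻¹' Ioi K) = μ (Ioi K) := by
  rw [Set.eval_preimage, Measure.pi_pi]
  rw [Finset.prod_eq_single i (fun j _ hj => by
    rw [Function.update_of_ne hj]; exact measure_univ)
    (fun h => absurd (Finset.mem_univ i) h)]
  rw [Function.update_self]

lemma notSecond_le (K : ℝ) :
    piP μ n {v : Fin n → ℝ | ¬ SecondLe K v} ≤ n * (μ (Ioi K)).toReal := by
  have hsub : {v : Fin n → ℝ | ¬ SecondLe K v} ⊆ ⋃ i, Function.eval i ⁻¹' Ioi K := by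
    intro v hv
    simp only [SecondLe, not_forall] at hv
    obtain ⟨i, j, hij, h⟩ := hv
    push_neg at h
    exact mem_iUnion.2 ⟨i, h.1⟩
  have h1 : (Measure.pi fun _ : Fin n => μ) {v : Fin n → ℝ | ¬ SecondLe K v}
      ≤ n * μ (Ioi K) := by
    calc (Measure.pi fun _ : Fin n => μ) {v : Fin n → ℝ | ¬ SecondLe K v}
        ≤ (Measure.pi fun _ : Fin n => μ) (⋃ i, Function.eval i ⁻¹' Ioi K) :=
          measure_mono hsub
      _ ≤ ∑' i : Fin n, (Measure.pi fun _ : Fin n => μ) (Function.eval i ⁻¹' Ioi K) :=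
          measure_iUnion_le _
      _ = ∑ i : Fin n, μ (Ioi K) := by
          rw [tsum_fintype]; exact Finset.sum_congr rfl fun i _ => eval_Ioi_measure μ i K
      _ = n * μ (Ioi K) := by
          rw [Finset.sum_const, Finset.card_univ, Fintype.card_fin, nsmul_eq_mul]
  calc piP μ n {v : Fin n → ℝ | ¬ SecondLe K v}
      ≤ ((n : ℝ≥0∞) * μ (Ioi K)).toReal :=
        ENNReal.toReal_mono (by finiteness) h1
    _ = n * (μ (Ioi K)).toReal := by
        rw [ENNReal.toReal_mul]; simp
  
lemma tendsto_notSecond :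
    Tendsto (fun K : ℝ => piP μ n {v : Fin n → ℝ | ¬ SecondLe K v}) atTop (nhds 0) := by
  have hIoi : Tendsto (fun K : ℝ => μ (Ioi K)) atTop (nhds 0) := by
    have h := tendsto_measure_iInter_atTop (μ := μ) (s := fun K : ℝ => Ioi K)
      (fun K => (measurableSet_Ioi).nullMeasurableSet)
      (fun a b hab => Ioi_subset_Ioi hab) ⟨0, measure_ne_top _ _⟩
    have : ⋂ K : ℝ, Ioi K = (∅ : Set ℝ) := by
      ext y; simp only [mem_iInter, mem_Ioi, mem_empty_iff_false, iff_false, not_forall, not_lt]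
      exact ⟨y, le_refl y⟩
    rw [this] at h
    simpa [Function.comp_def] using h
  have h2 : Tendsto (fun K : ℝ => (n : ℝ) * (μ (Ioi K)).toReal) atTop (nhds 0) := by
    have := (ENNReal.tendsto_toReal (by simp)).comp hIoi
    simpa using this.const_mul (n : ℝ)
  refine squeeze_zero (fun K => piP_nonneg μ _) (fun K => notSecond_le μ K) h2

lemma ge_one_sub (A : Set (Fin n → ℝ)) {x : ℝ}
    (hd : 0 < piP μ n {v : Fin n → ℝ | SumGt x v}) :
    1 - piP μ n Aᶜ / piP μ n {v : Fin n → ℝ | SumGt x v} ≤ condN μ n A x := by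
  set d := piP μ n {v : Fin n → ℝ | SumGt x v} with hdd
  have hsub : {v : Fin n → ℝ | SumGt x v} ⊆ (A ∩ {v | SumGt x v}) ∪ Aᶜ := by
    intro v hv
    by_cases hA : v ∈ A
    · exact Or.inl ⟨hA, hv⟩
    · exact Or.inr hA
  have hle : d ≤ piP μ n (A ∩ {v | SumGt x v}) + piP μ n Aᶜ := by
    have h1 : (Measure.pi fun _ : Fin n => μ) {v : Fin n → ℝ | SumGt x v}
        ≤ (Measure.pi fun _ : Fin n => μ) (A ∩ {v | SumGt x v})
          + (Measure.pi fun _ : Fin n => μ) Aᶜ :=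
      le_trans (measure_mono hsub) (measure_union_le _ _)
    calc d ≤ ((Measure.pi fun _ : Fin n => μ) (A ∩ {v | SumGt x v})
          + (Measure.pi fun _ : Fin n => μ) Aᶜ).toReal :=
        ENNReal.toReal_mono (by finiteness) h1
      _ = _ := ENNReal.toReal_add (measure_ne_top _ _) (measure_ne_top _ _)
  rw [condN, ← hdd, sub_le_iff_le_add, ← add_div, le_div_iff₀ hd, one_mul]
  exact hle

end Aux

theorem stmt1 (μ : Measure ℝ) [IsProbabilityMeasure μ]
    (hnn : μ (Set.Iio 0) = 0) (hub : ∀ x : ℝ, 0 < μ (Set.Ioi x))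
    (n : ℕ) (hn : 2 ≤ n) :
    Tendsto (fun K : ℝ =>
        liminf (fun x : ℝ => condN μ n {v | SecondLe K v} x) atTop) atTop (nhds 1)
    ↔ Tendsto (fun K : ℝ =>
        ⨅ x : Set.Ici (0:ℝ), condN μ n {v | SecondLe K v} (x : ℝ)) atTop (nhds 1) := by
  have hn0 : 0 < n := by omega
  set g : ℝ → ℝ → ℝ := fun K x => condN μ n {v | SecondLe K v} x with hg
  have hbddBelow : ∀ K : ℝ, BddBelow (range fun x : Set.Ici (0:ℝ) => g K (x : ℝ)) :=
    fun K => ⟨0, by rintro y ⟨x, rfl⟩; exact condN_nonneg μ _ _⟩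
  have hinf_le_one : ∀ K : ℝ, (⨅ x : Set.Ici (0:ℝ), g K (x : ℝ)) ≤ 1 :=
    fun K => le_trans (ciInf_le (hbddBelow K) ⟨0, self_mem_Ici⟩) (condN_le_one μ _ _)
  have hliminf_bdd : ∀ K : ℝ,
      IsBoundedUnder (· ≥ ·) atTop (fun x : ℝ => g K x) :=
    fun K => ⟨0, eventually_map.2 (Eventually.of_forall fun x => condN_nonneg μ _ _)⟩
  have hliminf_le_one : ∀ K : ℝ, liminf (fun x : ℝ => g K x) atTop ≤ 1 :=
    fun K => liminf_le_of_frequently_le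
      ((Eventually.of_forall fun x => condN_le_one μ _ x).frequently) (hliminf_bdd K)
  have hcobdd : ∀ K : ℝ, IsCoboundedUnder (· ≥ ·) atTop (fun x : ℝ => g K x) :=
    fun K => isCoboundedUnder_ge_of_le atTop (x := 1) fun x => condN_le_one μ _ x
  constructor
  · -- liminf version → inf version
    intro h
    rw [tendsto_order]
    constructor
    · intro a ha
      set a' : ℝ := (a + 1) / 2 with ha'
      have haa' : a < a' := by rw [ha']; linarith
      have ha'1 : a' < 1 := by rw [ha']; linarith
      -- find K₀ with liminf > a'
      obtain ⟨K₀, hK₀⟩ := ((tendsto_order.1 h).1 a' ha'1).exists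
      -- eventually in x, g K₀ x > a'
      obtain ⟨x₀', hx₀'⟩ := eventually_atTop.1
        (eventually_lt_of_lt_liminf hK₀ (hliminf_bdd K₀))
      set x₀ : ℝ := max x₀' 0 with hx₀def
      have hx₀nn : (0:ℝ) ≤ x₀ := le_max_right _ _
      have hx₀big : ∀ x : ℝ, x₀ ≤ x → a' < g K₀ x :=
        fun x hx => hx₀' x (le_trans (le_max_left _ _) hx)
      set c : ℝ := piP μ n {v : Fin n → ℝ | SumGt x₀ v} with hc
      have hcpos : 0 < c := denom_pos μ hub hn0 hx₀nn
      have hεpos : 0 < c * (1 - a') := mul_pos hcpos (by linarith)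
      obtain ⟨K₁, hK₁⟩ := eventually_atTop.1
        ((tendsto_notSecond μ (n := n)).eventually_lt_const hεpos)
      filter_upwards [eventually_ge_atTop K₀, eventually_ge_atTop K₁] with K hKK₀ hKK₁
      refine lt_of_lt_of_le haa' (le_ciInf ?_)
      rintro ⟨x, hx⟩
      rcases le_or_gt x₀ x with hxx | hxx
      · exact le_of_lt (lt_of_lt_of_le (hx₀big x hxx)
          (condN_mono μ (secondLe_mono hKK₀) x))
      · -- small x : use the uniform bound
        have hdx : 0 < piP μ n {v : Fin n → ℝ | SumGt x v} := denom_pos μ hub hn0 hx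
        have hdc : c ≤ piP μ n {v : Fin n → ℝ | SumGt x v} :=
          denom_antitone μ (le_of_lt hxx)
        have hb : piP μ n {v : Fin n → ℝ | ¬ SecondLe K v} < c * (1 - a') := hK₁ K hKK₁
        have hbnn : 0 ≤ piP μ n {v : Fin n → ℝ | ¬ SecondLe K v} := piP_nonneg μ _
        have hcompl : ({v : Fin n → ℝ | SecondLe K v})ᶜ = {v : Fin n → ℝ | ¬ SecondLe K v} := by
          ext v; simp
        have h1 : 1 - piP μ n {v : Fin n → ℝ | ¬ SecondLe K v}
            / piP μ n {v : Fin n → ℝ | SumGt x v} ≤ g K x := by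
          have := ge_one_sub μ {v : Fin n → ℝ | SecondLe K v} hdx
          rwa [hcompl] at this
        have h2 : piP μ n {v : Fin n → ℝ | ¬ SecondLe K v}
            / piP μ n {v : Fin n → ℝ | SumGt x v}
            ≤ piP μ n {v : Fin n → ℝ | ¬ SecondLe K v} / c :=
          div_le_div_of_nonneg_left hbnn hcpos hdc
        have h3 : piP μ n {v : Fin n → ℝ | ¬ SecondLe K v} / c < 1 - a' :=
          (div_lt_iff₀ hcpos).2 (by linarith [hb])
        linarith
    · intro a ha
      exact Eventually.of_forall fun K => lt_of_le_of_lt (hinf_le_one K) ha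
  · -- inf version → liminf version
    intro h
    rw [tendsto_order]
    constructor
    · intro a ha
      filter_upwards [(tendsto_order.1 h).1 a ha] with K hK
      refine lt_of_lt_of_le hK (le_liminf_of_le (hcobdd K) ?_)
      filter_upwards [eventually_ge_atTop (0:ℝ)] with x hx
      exact ciInf_le (hbddBelow K) ⟨x, hx⟩
    · intro a ha
      exact Eventually.of_forall fun K => lt_of_le_of_lt (hliminf_le_one K) ha
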